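/- Let k be a positive sixth-power-free integer such that for every prime p there exist x, y, z ∈ ℚ_p, not all zero, with x^6 + y^6 = k·z^6. Then k ≡ 1 or 2 (mod 7), k ≡ 1 or 2 (mod 8), and k ≡ 1 or 2 (mod 9). -/

import Mathlib

open PadicInt

lemma reduce6 {p : ℕ} [Fact p.Prime] (k : ℕ) (x y z : ℚ_[p])
    (h0 : ¬(x = 0 ∧ y = 0 ∧ z = 0)) (heq : x ^ 6 + y ^ 6 = (k : ℚ_[p]) * z ^ 6) :
    ∃ a b c : ℤ_[p], (IsUnit a ∨ IsUnit b ∨ IsUnit c) ∧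
      a ^ 6 + b ^ 6 = (k : ℤ_[p]) * c ^ 6 := by
  obtain ⟨w, hw, hx, hy, hz⟩ :
      ∃ w : ℚ_[p], (w = x ∨ w = y ∨ w = z) ∧ ‖x‖ ≤ ‖w‖ ∧ ‖y‖ ≤ ‖w‖ ∧ ‖z‖ ≤ ‖w‖ := by
    rcases le_total ‖x‖ ‖y‖ with h1 | h1 <;> rcases le_total ‖y‖ ‖z‖ with h2 | h2 <;>
      rcases le_total ‖x‖ ‖z‖ with h3 | h3 <;>
    first
      | exact ⟨x, Or.inl rfl, le_rfl, by linarith, by linarith⟩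
      | exact ⟨y, Or.inr (Or.inl rfl), by linarith, le_rfl, by linarith⟩
      | exact ⟨z, Or.inr (Or.inr rfl), by linarith, by linarith, le_rfl⟩
  have hw0 : w ≠ 0 := by
    rintro rfl
    simp only [norm_zero] at hx hy hz
    exact h0 ⟨norm_le_zero_iff.mp hx, norm_le_zero_iff.mp hy, norm_le_zero_iff.mp hz⟩
  have hwpos : (0:ℝ) < ‖w‖ := norm_pos_iff.mpr hw0
  refine ⟨⟨x / w, ?_⟩, ⟨y / w, ?_⟩, ⟨z / w, ?_⟩, ?_, ?_⟩
  · rw [norm_div]; exact (div_le_one hwpos).2 hx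
  · rw [norm_div]; exact (div_le_one hwpos).2 hy
  · rw [norm_div]; exact (div_le_one hwpos).2 hz
  · rcases hw with rfl | rfl | rfl
    · left; exact PadicInt.isUnit_iff.2 (by simp [PadicInt.norm_def, div_self hw0])
    · right; left; exact PadicInt.isUnit_iff.2 (by simp [PadicInt.norm_def, div_self hw0])
    · right; right; exact PadicInt.isUnit_iff.2 (by simp [PadicInt.norm_def, div_self hw0])
  · apply Subtype.coe_injective
    show (x / w) ^ 6 + (y / w) ^ 6 = (k : ℚ_[p]) * (z / w) ^ 6
    field_simp
    linear_combination heq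

lemma key6 {p : ℕ} [hp : Fact p.Prime] (e : ℕ) (he : e ≤ 6) (k : ℕ)
    (hk6 : ¬ p ^ 6 ∣ k)
    (hpow : ∀ u v : ZMod (p ^ e), u * v = 1 → u ^ 6 = 1)
    (h10 : (1 : ZMod (p ^ e)) ≠ 0) (h20 : (2 : ZMod (p ^ e)) ≠ 0)
    (a b c : ℤ_[p]) (hu : IsUnit a ∨ IsUnit b ∨ IsUnit c)
    (heq : a ^ 6 + b ^ 6 = (k : ℤ_[p]) * c ^ 6) :
    (k : ZMod (p ^ e)) = 1 ∨ (k : ZMod (p ^ e)) = 2 := by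
  set φ : ℤ_[p] →+* ZMod (p ^ e) := PadicInt.toZModPow e with hφ
  have hunit : ∀ t : ℤ_[p], IsUnit t → (φ t) ^ 6 = 1 := by
    intro t ht
    obtain ⟨u, rfl⟩ := ht
    exact hpow (φ u) (φ ((u⁻¹ : ℤ_[p]ˣ) : ℤ_[p])) (by rw [← map_mul]; simp)
  have hp6 : ∀ n : ℕ, e ≤ n → ((p : ZMod (p ^ e))) ^ n = 0 := by
    intro n hn
    have : ((p ^ n : ℕ) : ZMod (p ^ e)) = 0 :=
      (ZMod.natCast_eq_zero_iff _ _).2 (pow_dvd_pow p hn)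
    rw [Nat.cast_pow] at this
    exact this
  have hzero : ∀ t : ℤ_[p], ¬ IsUnit t → (φ t) ^ 6 = 0 := by
    intro t ht
    obtain ⟨s, rfl⟩ := (PadicInt.norm_lt_one_iff_dvd t).1 (PadicInt.not_isUnit_iff.1 ht)
    rw [map_mul, mul_pow, map_natCast, ← Nat.cast_pow]
    have : ((p : ZMod (p ^ e))) ^ 6 = 0 := hp6 6 he
    rw [Nat.cast_pow, this, zero_mul]
  have hφeq : φ a ^ 6 + φ b ^ 6 = (k : ZMod (p ^ e)) * φ c ^ 6 := by
    have := congrArg φ heq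
    simpa [map_add, map_mul, map_pow, map_natCast] using this
  by_cases hc : IsUnit c
  · rw [hunit c hc, mul_one] at hφeq
    by_cases ha : IsUnit a <;> by_cases hb : IsUnit b
    · right; rw [← hφeq, hunit a ha, hunit b hb]; norm_num
    · left; rw [← hφeq, hunit a ha, hzero b hb, add_zero]
    · left; rw [← hφeq, hzero a ha, hunit b hb, zero_add]
    · -- both a, b nonunits: p^6 ∣ k, contradiction
      exfalso
      obtain ⟨s, hs⟩ := (PadicInt.norm_lt_one_iff_dvd a).1 (PadicInt.not_isUnit_iff.1 ha)
      obtain ⟨t, ht⟩ := (PadicInt.norm_lt_one_iff_dvd b).1 (PadicInt.not_isUnit_iff.1 hb)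
      have hdvd : ((p : ℤ_[p]) ^ 6) ∣ (k : ℤ_[p]) * c ^ 6 := by
        rw [← heq, hs, ht]
        exact Dvd.dvd.add ⟨s ^ 6, by ring⟩ ⟨t ^ 6, by ring⟩
      have hdvd2 : ((p : ℤ_[p]) ^ 6) ∣ (k : ℤ_[p]) := by
        obtain ⟨u, hu'⟩ := hc
        rw [← hu'] at hdvd
        exact (Units.dvd_mul_right (u := u ^ 6)).1 (by simpa [mul_pow] using hdvd)
      apply hk6
      obtain ⟨d, hd⟩ := hdvd2
      have : ((k : ℕ) : ZMod (p ^ 6)) = 0 := by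
        have := congrArg (PadicInt.toZModPow (p := p) 6) hd
        rw [map_natCast, map_mul, map_pow, map_natCast] at this
        rw [this]
        have h6 : ((p : ZMod (p ^ 6))) ^ 6 = 0 := by
          have : ((p ^ 6 : ℕ) : ZMod (p ^ 6)) = 0 :=
            (ZMod.natCast_eq_zero_iff _ _).2 dvd_rfl
          rw [Nat.cast_pow] at this
          exact this
        rw [h6, zero_mul]
      exact (ZMod.natCast_eq_zero_iff _ _).1 this
  · exfalso
    rw [hzero c hc, mul_zero] at hφeq
    rcases hu with ha | hb | hc'
    · by_cases hb : IsUnit b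
      · rw [hunit a ha, hunit b hb] at hφeq; exact h20 (by rw [← hφeq]; norm_num)
      · rw [hunit a ha, hzero b hb, add_zero] at hφeq; exact h10 hφeq
    · by_cases ha : IsUnit a
      · rw [hunit a ha, hunit b hb] at hφeq; exact h20 (by rw [← hφeq]; norm_num)
      · rw [hzero a ha, hunit b hb, zero_add] at hφeq; exact h10 hφeq
    · exact hc hc'

/-- If `k` is a positive sixth-power-free integer such that `x^6 + y^6 = k·z^6` has a
nontrivial solution over `ℚ_p` for every prime `p`, then `k ≡ 1` or `2 (mod 7)`,
`k ≡ 1` or `2 (mod 8)`, and `k ≡ 1` or `2 (mod 9)`. -/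
theorem residues_of_locally_solvable (k : ℕ) (hk : 0 < k)
    (hsf : ¬ ∃ m : ℕ, 1 < m ∧ m ^ 6 ∣ k)
    (hloc : ∀ (p : ℕ) [Fact p.Prime],
      ∃ x y z : ℚ_[p], ¬(x = 0 ∧ y = 0 ∧ z = 0) ∧ x ^ 6 + y ^ 6 = (k : ℚ_[p]) * z ^ 6) :
    (k % 7 = 1 ∨ k % 7 = 2) ∧ (k % 8 = 1 ∨ k % 8 = 2) ∧ (k % 9 = 1 ∨ k % 9 = 2) := by
  have main : ∀ (p e : ℕ) [Fact p.Prime], e ≤ 6 →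
      (∀ u v : ZMod (p ^ e), u * v = 1 → u ^ 6 = 1) →
      (1 : ZMod (p ^ e)) ≠ 0 → (2 : ZMod (p ^ e)) ≠ 0 →
      (k : ZMod (p ^ e)) = 1 ∨ (k : ZMod (p ^ e)) = 2 := by
    intro p e _ he hpow h10 h20
    obtain ⟨x, y, z, h0, heq⟩ := hloc p
    obtain ⟨a, b, c, hu, heq'⟩ := reduce6 k x y z h0 heq
    exact key6 e he k (fun hd => hsf ⟨p, (Fact.out : p.Prime).one_lt, hd⟩) hpow h10 h20 a b c hu heq'
  haveI h7 : Fact (Nat.Prime 7) := ⟨by norm_num⟩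
  have conv : ∀ (M : ℕ), (k : ZMod M) = 1 ∨ (k : ZMod M) = 2 →
      ((1 : ZMod M).val = 1) → ((2 : ZMod M).val = 2) →
      (k % M = 1 ∨ k % M = 2) := by
    intro M h hv1 hv2
    rcases h with h | h
    · left; rw [← ZMod.val_natCast, h, hv1]
    · right; rw [← ZMod.val_natCast, h, hv2]
  refine ⟨?_, ?_, ?_⟩
  · have := main 7 1 (by norm_num) (by decide) (by decide) (by decide)
    have h := conv (7 ^ 1) (by exact_mod_cast this) (by decide) (by decide)
    simpa using h
  · have := main 2 3 (by norm_num) (by decide) (by decide) (by decide)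
    have h := conv (2 ^ 3) (by exact_mod_cast this) (by decide) (by decide)
    simpa using h
  · have := main 3 2 (by norm_num) (by decide) (by decide) (by decide)
    have h := conv (3 ^ 2) (by exact_mod_cast this) (by decide) (by decide)
    simpa using h
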